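/- Let p(x) = a_0 + a_1 x + ... + a_{n−1} x^{n−1} be a section-hyperbolic polynomial of degree n−1 (n ≥ 2). Then the set { A > 0 : the polynomial p(x) + A x^n has all of its complex roots real } is nonempty and has a greatest element. -/

import Mathlib

open Polynomial

/-- A real polynomial is hyperbolic if all of its complex roots are real. -/
def Hyperbolic (P : Polynomial ℝ) : Prop :=
  ∀ z : ℂ, Polynomial.aeval z P = 0 → z.im = 0

/-- The `i`-th section `a_0 + a_1 x + ... + a_i x^i` of the coefficient sequence `a`. -/
noncomputable def sect (a : ℕ → ℝ) (i : ℕ) : Polynomial ℝ :=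
  ∑ j ∈ Finset.range (i + 1), Polynomial.C (a j) * Polynomial.X ^ j

/-- A polynomial `a_0 + ... + a_n x^n` with all coefficients positive is section-hyperbolic
if each of its sections of degree `1,...,n` is hyperbolic. -/
def SectionHyperbolic (a : ℕ → ℝ) (n : ℕ) : Prop :=
  (∀ i ≤ n, 0 < a i) ∧ ∀ i, 1 ≤ i → i ≤ n → Hyperbolic (sect a i)

section SHdev
open Multiset
namespace SH


noncomputable def cA (f : Polynomial ℝ) (x : ℝ) : ℕ :=
  Multiset.card (f.roots.filter (fun y => x < y))

noncomputable def cB (f : Polynomial ℝ) (x : ℝ) : ℕ :=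
  Multiset.card (f.roots.filter (fun y => y < x))

lemma card_split (M : Multiset ℝ) (s : ℝ) :
    Multiset.card M = Multiset.card (M.filter (fun y => y < s)) + M.count s
      + Multiset.card (M.filter (fun y => s < y)) := by
  classical
  have h1 := Multiset.filter_add_not (fun y => y < s) M
  have h2 := Multiset.filter_add_not (fun y => s < y) (M.filter (fun y => ¬ y < s))
  have hc : Multiset.card M = Multiset.card (M.filter (fun y => y < s)) +
      Multiset.card (M.filter (fun y => ¬ y < s)) := by
    conv_lhs => rw [← h1]
    rw [Multiset.card_add]
  have hc2 : Multiset.card (M.filter (fun y => ¬ y < s)) =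
      Multiset.card ((M.filter (fun y => ¬ y < s)).filter (fun y => s < y)) +
      Multiset.card ((M.filter (fun y => ¬ y < s)).filter (fun y => ¬ s < y)) := by
    conv_lhs => rw [← h2]
    rw [Multiset.card_add]
  have e1 : (M.filter (fun y => ¬ y < s)).filter (fun y => s < y) =
      M.filter (fun y => s < y) := by
    rw [Multiset.filter_filter]
    exact Multiset.filter_congr (fun y _ => by constructor <;> intro hy <;>
      [exact hy.1; exact ⟨hy, not_lt.2 hy.le⟩])
  have e2 : (M.filter (fun y => ¬ y < s)).filter (fun y => ¬ s < y) =
      M.filter (fun y => y = s) := by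
    rw [Multiset.filter_filter]
    exact Multiset.filter_congr (fun y _ => by
      constructor
      · rintro ⟨h1', h2'⟩; exact le_antisymm (not_lt.1 h1') (not_lt.1 h2')
      · rintro rfl; simp)
  have e3 : Multiset.card (M.filter (fun y => y = s)) = M.count s := by
    rw [Multiset.count_eq_card_filter_eq]
    congr 1
    exact Multiset.filter_congr (fun y _ => by constructor <;> (intro h; exact h.symm))
  rw [e1, e2, e3] at hc2; omega

lemma cA_split {M : Multiset ℝ} {x s : ℝ} (h : x < s) :
    Multiset.card (M.filter (fun y => x < y)) =
      Multiset.card (M.filter (fun y => x < y ∧ y < s)) + M.count s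
      + Multiset.card (M.filter (fun y => s < y)) := by
  classical
  have H := card_split (M.filter (fun y => x < y)) s
  rw [Multiset.filter_filter, Multiset.filter_filter, Multiset.count_filter] at H
  simp only [h, if_pos] at H
  have e1 : (M.filter fun a => a < s ∧ x < a) = (M.filter fun y => x < y ∧ y < s) :=
    Multiset.filter_congr (fun y _ => by tauto)
  have e2 : (M.filter fun a => s < a ∧ x < a) = (M.filter fun y => s < y) :=
    Multiset.filter_congr (fun y _ => by
      constructor
      · rintro ⟨h1, _⟩; exact h1
      · intro h1; exact ⟨h1, h.trans h1⟩)
  rw [e1, e2] at H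
  omega

lemma cB_split {M : Multiset ℝ} {x s : ℝ} (h : s < x) :
    Multiset.card (M.filter (fun y => y < x)) =
      Multiset.card (M.filter (fun y => s < y ∧ y < x)) + M.count s
      + Multiset.card (M.filter (fun y => y < s)) := by
  classical
  have := card_split (M.filter (fun y => y < x)) s
  rw [Multiset.filter_filter, Multiset.filter_filter, Multiset.count_filter] at this
  simp only [h, if_pos] at this
  rw [this]
  have e1 : Multiset.card (M.filter fun y => y < s ∧ y < x) =
      Multiset.card (M.filter (fun y => y < s)) := by
    congr 1
    exact Multiset.filter_congr (fun y _ => by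
      constructor
      · rintro ⟨h1, _⟩; exact h1
      · intro h1; exact ⟨h1, h1.trans h⟩)
  have e2 : Multiset.card (M.filter fun y => s < y ∧ y < x) =
      Multiset.card (M.filter (fun y => s < y ∧ y < x)) := rfl
  omega

lemma natDegree_pos_of_root {f : Polynomial ℝ} (hf : f ≠ 0) {r : ℝ} (hr : f.eval r = 0) :
    1 ≤ f.natDegree := by
  by_contra hdeg
  push_neg at hdeg
  interval_cases h : f.natDegree
  · have := Polynomial.eq_C_of_natDegree_eq_zero h
    rw [this] at hr hf
    simp at hr
    rw [hr] at hf
    simp at hf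

lemma derivative_ne_zero_of_two_roots {f : Polynomial ℝ} (hf : f ≠ 0) {r s : ℝ}
    (hr : f.eval r = 0) (hrs : r ≠ s) (hs : f.eval s = 0) : f.derivative ≠ 0 := by
  intro h0
  have h1 := Polynomial.natDegree_eq_zero_of_derivative_eq_zero h0
  obtain ⟨c, rfl⟩ : ∃ c, f = Polynomial.C c := ⟨f.coeff 0, Polynomial.eq_C_of_natDegree_eq_zero h1⟩
  simp at hr
  rw [hr] at hf
  simp at hf

lemma count_derivative_roots {f : Polynomial ℝ} (hf : f ≠ 0) {r : ℝ} (hr : f.eval r = 0) :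
    f.derivative.roots.count r + 1 = f.roots.count r := by
  classical
  have hd := Polynomial.derivative_rootMultiplicity_of_root (p := f) (t := r) hr
  have hpos : 0 < f.rootMultiplicity r := (Polynomial.rootMultiplicity_pos hf).2 hr
  rw [Polynomial.count_roots, Polynomial.count_roots, hd]
  omega

/-- Half-line Rolle with multiplicity, right version. -/
lemma rolle_right (f : Polynomial ℝ) (hf : f ≠ 0) :
    ∀ k x, cA f x = k →
      cA f x ≤ cA f.derivative x + 1 ∧ (f.eval x = 0 → cA f x ≤ cA f.derivative x) := by
  intro k
  induction k using Nat.strong_induction_on with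
  | _ k IH =>
    intro x hk
    rcases Nat.eq_zero_or_pos k with h0 | hpos
    · subst h0
      constructor
      · omega
      · intro _; omega
    · -- there is a root above x; take the least one
      have hRne : (f.roots.filter (fun y => x < y)).toFinset.Nonempty := by
        rw [Multiset.toFinset_nonempty]
        intro hnil
        rw [cA, hnil] at hk
        simp at hk
        omega
      set r := (f.roots.filter (fun y => x < y)).toFinset.min' hRne with hrdef
      have hrmem : r ∈ f.roots.filter (fun y => x < y) := by
        have := (f.roots.filter (fun y => x < y)).toFinset.min'_mem hRne
        rwa [Multiset.mem_toFinset] at this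
      have hrroots : r ∈ f.roots := Multiset.mem_of_mem_filter hrmem
      have hxr : x < r := by
        have := Multiset.of_mem_filter hrmem
        simpa using this
      have hrval : f.eval r = 0 := (Polynomial.mem_roots'.1 hrroots).2
      have hrmin : ∀ y ∈ f.roots, x < y → r ≤ y := by
        intro y hy hxy
        apply Finset.min'_le
        rw [Multiset.mem_toFinset, Multiset.mem_filter]
        exact ⟨hy, hxy⟩
      -- no roots of f in (x, r)
      have hmid : (f.roots.filter (fun y => x < y ∧ y < r)) = 0 := by
        rw [Multiset.filter_eq_nil]
        rintro y hy ⟨h1, h2⟩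
        exact absurd (hrmin y hy h1) (not_le.2 h2)
      have hsplit : cA f x = f.roots.count r + cA f r := by
        have := cA_split (M := f.roots) hxr
        rw [cA, cA, this, hmid]
        simp
      have hsplit' : cA f.derivative x =
          Multiset.card (f.derivative.roots.filter (fun y => x < y ∧ y < r)) +
          f.derivative.roots.count r + cA f.derivative r := by
        have := cA_split (M := f.derivative.roots) hxr
        rw [cA, cA, this]
      have hcount := count_derivative_roots hf hrval
      have hcountpos : 1 ≤ f.roots.count r := by
        rw [Polynomial.count_roots]
        exact (Polynomial.rootMultiplicity_pos hf).2 hrval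
      have hlt : cA f r < k := by omega
      have IHr := (IH _ hlt r rfl).2 hrval
      constructor
      · omega
      · intro hxval
        -- Rolle between x and r
        have hfd : f.derivative ≠ 0 :=
          derivative_ne_zero_of_two_roots hf hxval (ne_of_lt hxr) hrval
        obtain ⟨c, hc, hc0⟩ := exists_deriv_eq_zero hxr
          (f.continuousOn) (by simp [hxval, hrval])
        rw [Polynomial.deriv] at hc0
        have hcmem : c ∈ f.derivative.roots.filter (fun y => x < y ∧ y < r) := by
          rw [Multiset.mem_filter]
          exact ⟨Polynomial.mem_roots'.2 ⟨hfd, hc0⟩, hc.1, hc.2⟩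
        have hmid1 : 1 ≤ Multiset.card (f.derivative.roots.filter (fun y => x < y ∧ y < r)) :=
          Multiset.card_pos_iff_exists_mem.2 ⟨c, hcmem⟩
        omega

/-- Half-line Rolle with multiplicity, left version. -/
lemma rolle_left (f : Polynomial ℝ) (hf : f ≠ 0) :
    ∀ k x, cB f x = k →
      cB f x ≤ cB f.derivative x + 1 ∧ (f.eval x = 0 → cB f x ≤ cB f.derivative x) := by
  intro k
  induction k using Nat.strong_induction_on with
  | _ k IH =>
    intro x hk
    rcases Nat.eq_zero_or_pos k with h0 | hpos
    · subst h0
      exact ⟨by omega, fun _ => by omega⟩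
    · have hRne : (f.roots.filter (fun y => y < x)).toFinset.Nonempty := by
        rw [Multiset.toFinset_nonempty]
        intro hnil
        rw [cB, hnil] at hk
        simp at hk
        omega
      set r := (f.roots.filter (fun y => y < x)).toFinset.max' hRne with hrdef
      have hrmem : r ∈ f.roots.filter (fun y => y < x) := by
        have := (f.roots.filter (fun y => y < x)).toFinset.max'_mem hRne
        rwa [Multiset.mem_toFinset] at this
      have hrroots : r ∈ f.roots := Multiset.mem_of_mem_filter hrmem
      have hxr : r < x := by
        have := Multiset.of_mem_filter hrmem
        simpa using this
      have hrval : f.eval r = 0 := (Polynomial.mem_roots'.1 hrroots).2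
      have hrmin : ∀ y ∈ f.roots, y < x → y ≤ r := by
        intro y hy hxy
        apply Finset.le_max'
        rw [Multiset.mem_toFinset, Multiset.mem_filter]
        exact ⟨hy, hxy⟩
      have hmid : (f.roots.filter (fun y => r < y ∧ y < x)) = 0 := by
        rw [Multiset.filter_eq_nil]
        rintro y hy ⟨h1, h2⟩
        exact absurd (hrmin y hy h2) (not_le.2 h1)
      have hsplit : cB f x = f.roots.count r + cB f r := by
        have := cB_split (M := f.roots) hxr
        rw [cB, cB, this, hmid]
        simp
      have hsplit' : cB f.derivative x =
          Multiset.card (f.derivative.roots.filter (fun y => r < y ∧ y < x)) +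
          f.derivative.roots.count r + cB f.derivative r := by
        have := cB_split (M := f.derivative.roots) hxr
        rw [cB, cB, this]
      have hcount := count_derivative_roots hf hrval
      have hcountpos : 1 ≤ f.roots.count r := by
        rw [Polynomial.count_roots]
        exact (Polynomial.rootMultiplicity_pos hf).2 hrval
      have hlt : cB f r < k := by omega
      have IHr := (IH _ hlt r rfl).2 hrval
      constructor
      · omega
      · intro hxval
        have hfd : f.derivative ≠ 0 :=
          derivative_ne_zero_of_two_roots hf hxval (ne_of_gt hxr) hrval
        obtain ⟨c, hc, hc0⟩ := exists_deriv_eq_zero hxr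
          (f.continuousOn) (by simp [hxval, hrval])
        rw [Polynomial.deriv] at hc0
        have hcmem : c ∈ f.derivative.roots.filter (fun y => r < y ∧ y < x) := by
          rw [Multiset.mem_filter]
          exact ⟨Polynomial.mem_roots'.2 ⟨hfd, hc0⟩, hc.1, hc.2⟩
        have hmid1 : 1 ≤ Multiset.card (f.derivative.roots.filter (fun y => r < y ∧ y < x)) :=
          Multiset.card_pos_iff_exists_mem.2 ⟨c, hcmem⟩
        omega


lemma card_ge_of_hyperbolic : ∀ m (f : Polynomial ℝ), f.natDegree = m → f ≠ 0 →
    Hyperbolic f → m ≤ Multiset.card f.roots := by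
  intro m
  induction m using Nat.strong_induction_on with
  | _ m IH =>
    intro f hdeg hf hhyp
    rcases Nat.eq_zero_or_pos m with h0 | hpos
    · omega
    · have hdegpos : 0 < (f.map (algebraMap ℝ ℂ)).degree := by
        rw [Polynomial.degree_map_eq_of_injective (algebraMap ℝ ℂ).injective]
        exact Polynomial.natDegree_pos_iff_degree_pos.1 (by omega)
      obtain ⟨z, hz⟩ := Complex.exists_root hdegpos
      have hzf : Polynomial.aeval z f = 0 := by
        rw [Polynomial.aeval_def, Polynomial.eval₂_eq_eval_map]
        exact hz
      have him : z.im = 0 := hhyp z hzf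
      set r := z.re with hr
      have hzr : z = (r : ℂ) := by
        apply Complex.ext <;> simp [him, hr]
      have hfr : f.eval r = 0 := by
        have h4 : (algebraMap ℝ ℂ) (f.eval r) = 0 := by
          rw [← Polynomial.eval₂_at_apply, ← Polynomial.aeval_def]
          show Polynomial.aeval ((r : ℝ) : ℂ) f = 0
          rw [← hzr]; exact hzf
        have := (algebraMap ℝ ℂ).injective (a₁ := f.eval r) (a₂ := 0) (by simpa using h4)
        exact this
      obtain ⟨g, hg⟩ := (Polynomial.dvd_iff_isRoot.2 hfr)
      have hgne : g ≠ 0 := by rintro rfl; simp at hg; exact hf hg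
      have hXne : (Polynomial.X - Polynomial.C r) ≠ 0 := Polynomial.X_sub_C_ne_zero r
      have hdegg : g.natDegree = m - 1 := by
        have := Polynomial.natDegree_mul hXne hgne
        rw [← hg] at this
        simp [Polynomial.natDegree_X_sub_C] at this
        omega
      have hhypg : Hyperbolic g := by
        intro w hw
        apply hhyp w
        rw [hg, map_mul, hw, mul_zero]
      have hroots : f.roots = (Polynomial.X - Polynomial.C r).roots + g.roots := by
        rw [hg, Polynomial.roots_mul (by rw [← hg]; exact hf)]
      have hIH := IH (m - 1) (by omega) g hdegg hgne hhypg
      rw [hroots, Multiset.card_add, Polynomial.roots_X_sub_C]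
      simp only [Multiset.card_singleton]
      omega

lemma hyperbolic_iff {f : Polynomial ℝ} (hf : f ≠ 0) :
    Hyperbolic f ↔ Multiset.card f.roots = f.natDegree := by
  constructor
  · intro hhyp
    have h1 := card_ge_of_hyperbolic f.natDegree f rfl hf hhyp
    have h2 := Polynomial.card_roots' f
    omega
  · intro hcard z hz
    have hfe := Polynomial.C_leadingCoeff_mul_prod_multiset_X_sub_C hcard
    rw [← hfe] at hz
    rw [map_mul, Polynomial.aeval_C] at hz
    have hlead : (algebraMap ℝ ℂ) f.leadingCoeff ≠ 0 := by
      simpa using Polynomial.leadingCoeff_ne_zero.2 hf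
    have hprod : Polynomial.aeval z (f.roots.map fun a => Polynomial.X - Polynomial.C a).prod = 0 := by
      rcases mul_eq_zero.1 hz with h | h
      · exact absurd h hlead
      · exact h
    rw [map_multiset_prod, Multiset.map_map] at hprod
    have hmem := Multiset.prod_eq_zero_iff.1 hprod
    obtain ⟨r, hr, hrw⟩ := Multiset.mem_map.1 hmem
    simp only [Function.comp_apply, map_sub, Polynomial.aeval_X, Polynomial.aeval_C] at hrw
    have hz2 : z = (algebraMap ℝ ℂ) r := by linear_combination hrw
    rw [hz2, Complex.coe_algebraMap]
    simp

lemma prod_pos_of_pos : ∀ {M : Multiset ℝ}, (∀ y ∈ M, 0 < y) → 0 < M.prod := by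
  intro M
  induction M using Multiset.induction_on with
  | empty => intro _; simp
  | cons a M IH =>
    intro h
    rw [Multiset.prod_cons]
    exact mul_pos (h a (Multiset.mem_cons_self a M))
      (IH (fun y hy => h y (Multiset.mem_cons_of_mem hy)))

lemma prod_neg_sign : ∀ {M : Multiset ℝ}, (∀ y ∈ M, y < 0) →
    0 < (-1 : ℝ) ^ (Multiset.card M) * M.prod := by
  intro M
  induction M using Multiset.induction_on with
  | empty => intro _; simp
  | cons a M IH =>
    intro h
    have ha : a < 0 := h a (Multiset.mem_cons_self a M)
    have hIH := IH (fun y hy => h y (Multiset.mem_cons_of_mem hy))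
    have : (-1 : ℝ) ^ (Multiset.card (a ::ₘ M)) * (a ::ₘ M).prod =
        (-a) * ((-1 : ℝ) ^ (Multiset.card M) * M.prod) := by
      rw [Multiset.card_cons, Multiset.prod_cons, pow_succ]
      ring
    rw [this]
    exact mul_pos (by linarith) hIH

lemma sign_eval {f : Polynomial ℝ} (hcard : Multiset.card f.roots = f.natDegree)
    (hlead : 0 < f.leadingCoeff) {x : ℝ} (hx : f.eval x ≠ 0) :
    0 < (-1 : ℝ) ^ (cA f x) * f.eval x := by
  classical
  have hfe := Polynomial.C_leadingCoeff_mul_prod_multiset_X_sub_C hcard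
  have heval : f.eval x = f.leadingCoeff * ((f.roots.map (fun r => x - r)).prod) := by
    conv_lhs => rw [← hfe]
    rw [Polynomial.eval_mul, Polynomial.eval_C, Polynomial.eval_multiset_prod,
      Multiset.map_map]
    simp
  set M := f.roots.map (fun r => x - r) with hM
  have hM0 : (0 : ℝ) ∉ M := by
    intro h0
    apply hx
    rw [heval, Multiset.prod_eq_zero h0, mul_zero]
  have hMsplit := Multiset.filter_add_not (fun y => y < 0) M
  have hprod : M.prod = (M.filter (fun y => y < 0)).prod *
      (M.filter (fun y => ¬ y < 0)).prod := by
    conv_lhs => rw [← hMsplit]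
    rw [Multiset.prod_add]
  have hpos : 0 < (M.filter (fun y => ¬ y < 0)).prod := by
    apply prod_pos_of_pos
    intro y hy
    have h1 := Multiset.of_mem_filter hy
    have h2 := Multiset.mem_of_mem_filter hy
    rcases lt_or_eq_of_le (not_lt.1 h1) with h | h
    · exact h
    · exact absurd (h ▸ h2) hM0
  have hcnt : Multiset.card (M.filter (fun y => y < 0)) = cA f x := by
    rw [hM, Multiset.filter_map, Multiset.card_map, cA]
    congr 1
    exact Multiset.filter_congr (fun y _ => by
      simp only [Function.comp_apply]
      constructor
      · intro h; linarith
      · intro h; linarith)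
  have hneg : 0 < (-1 : ℝ) ^ (cA f x) * (M.filter (fun y => y < 0)).prod := by
    rw [← hcnt]
    exact prod_neg_sign (fun y hy => (Multiset.mem_filter.1 hy).2)
  rw [heval, hprod]
  calc (0:ℝ) < f.leadingCoeff * (((-1:ℝ)^(cA f x) * (M.filter (fun y => y < 0)).prod) *
      (M.filter (fun y => ¬ y < 0)).prod) := by positivity
  _ = (-1:ℝ)^(cA f x) * (f.leadingCoeff * ((M.filter (fun y => y < 0)).prod *
      (M.filter (fun y => ¬ y < 0)).prod)) := by ring

lemma roots_card_derivative {f : Polynomial ℝ} (hf : f ≠ 0)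
    (hcard : Multiset.card f.roots = f.natDegree) (hdeg : 1 ≤ f.natDegree) :
    Multiset.card f.derivative.roots = f.natDegree - 1 := by
  classical
  have hne : f.roots.toFinset.Nonempty := by
    rw [Multiset.toFinset_nonempty]
    intro h0
    rw [h0] at hcard
    simp at hcard
    omega
  set x := f.roots.toFinset.min' hne - 1 with hx
  have hall : ∀ y ∈ f.roots, x < y := by
    intro y hy
    have := Finset.min'_le f.roots.toFinset y (Multiset.mem_toFinset.2 hy)
    rw [hx]
    linarith
  have hcAx : cA f x = Multiset.card f.roots := by
    rw [cA]
    congr 1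
    rw [Multiset.filter_eq_self]
    exact hall
  have h1 := (rolle_right f hf (cA f x) x rfl).1
  have h2 : cA f.derivative x ≤ Multiset.card f.derivative.roots :=
    Multiset.card_le_card (Multiset.filter_le _ _)
  have h3 : Multiset.card f.derivative.roots ≤ f.derivative.natDegree :=
    Polynomial.card_roots' _
  have h4 : f.derivative.natDegree ≤ f.natDegree - 1 := Polynomial.natDegree_derivative_le f
  omega

lemma key_forward {f : Polynomial ℝ} (hf : f ≠ 0)
    (hcard : Multiset.card f.roots = f.natDegree) (hdeg : 1 ≤ f.natDegree)
    {x : ℝ} (hx : f.derivative.eval x = 0) :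
    (f.eval x = 0 → cA f.derivative x = cA f x ∧ cB f.derivative x = cB f x
        ∧ f.derivative.roots.count x + 1 = f.roots.count x) ∧
    (f.eval x ≠ 0 → f.derivative.roots.count x = 1 ∧ cA f.derivative x + 1 = cA f x) := by
  classical
  have hfd : f.derivative ≠ 0 := by
    intro h0
    have := Polynomial.natDegree_eq_zero_of_derivative_eq_zero h0
    omega
  have hT : cB f x + f.roots.count x + cA f x = f.natDegree := by
    unfold cA cB
    have := card_split f.roots x
    omega
  have hT' : cB f.derivative x + f.derivative.roots.count x + cA f.derivative x
      = f.natDegree - 1 := by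
    unfold cA cB
    have h5 := card_split f.derivative.roots x
    have h6 := roots_card_derivative hf hcard hdeg
    omega
  have hcnt' : 1 ≤ f.derivative.roots.count x := by
    rw [Polynomial.count_roots]
    exact (Polynomial.rootMultiplicity_pos hfd).2 hx
  have hra := rolle_right f hf (cA f x) x rfl
  have hrb := rolle_left f hf (cB f x) x rfl
  constructor
  · intro hval
    have hc := count_derivative_roots hf hval
    have h1 := hra.2 hval
    have h2 := hrb.2 hval
    omega
  · intro hval
    have hcnt0 : f.roots.count x = 0 :=
      Multiset.count_eq_zero.2 (fun hmem => hval ((Polynomial.mem_roots'.1 hmem).2))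
    have h1 := hra.1
    have h2 := hrb.1
    omega

lemma key_forward_sign {f : Polynomial ℝ} (hf : f ≠ 0)
    (hcard : Multiset.card f.roots = f.natDegree) (hdeg : 1 ≤ f.natDegree)
    (hlead : 0 < f.leadingCoeff) {x : ℝ} (hx : f.derivative.eval x = 0)
    (hval : f.eval x ≠ 0) :
    (-1 : ℝ) ^ (cA f.derivative x) * f.eval x < 0 := by
  obtain ⟨-, h2⟩ := (key_forward hf hcard hdeg hx).2 hval
  have hs := sign_eval hcard hlead hval
  have hp : (-1:ℝ) ^ (cA f x) = -(-1:ℝ) ^ (cA f.derivative x) := by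
    rw [← h2, pow_succ]
    ring
  rw [hp] at hs
  linarith

lemma Wstep (f : Polynomial ℝ) (hf : f ≠ 0) (hlead : 0 < f.leadingCoeff)
    (hdegpos : 0 < f.degree)
    (hC : ∀ y : ℝ, f.derivative.eval y = 0 →
       (f.eval y = 0 ∨ f.derivative.roots.count y = 1) ∧
       (-1:ℝ) ^ (cA f.derivative y) * f.eval y ≤ 0) :
    ∀ k x, f.derivative.eval x = 0 → cA f.derivative x = k →
      (f.eval x = 0 →
        cA f.derivative x + f.derivative.roots.count x + 1 ≤ cA f x + f.roots.count x) ∧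
      (f.eval x ≠ 0 → cA f.derivative x + 1 ≤ cA f x + f.roots.count x) := by
  intro k
  induction k using Nat.strong_induction_on with
  | _ k IH =>
    intro x hx hk
    by_cases hS : (f.derivative.roots.filter (fun y => x < y)) = 0
    · -- base case : no critical points above x
      have hk0 : cA f.derivative x = 0 := by rw [cA, hS]; simp
      constructor
      · intro hval
        have hc := count_derivative_roots hf hval
        omega
      · intro hval
        have hsign := (hC x hx).2
        rw [hk0, pow_zero, one_mul] at hsign
        have hneg : f.eval x < 0 := lt_of_le_of_ne hsign hval
        have ht := Polynomial.tendsto_atTop_of_leadingCoeff_nonneg f hdegpos (le_of_lt hlead)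
        obtain ⟨y, hy1, hy2⟩ :=
          ((ht.eventually_gt_atTop 0).and (Filter.eventually_gt_atTop x)).exists
        obtain ⟨c, hc1, hc2⟩ := intermediate_value_Ioo (le_of_lt hy2) f.continuousOn
          (Set.mem_Ioo.2 ⟨hneg, hy1⟩)
        have hcroot : c ∈ f.roots.filter (fun y => x < y) := by
          rw [Multiset.mem_filter]
          exact ⟨Polynomial.mem_roots'.2 ⟨hf, hc2⟩, hc1.1⟩
        have h1 : 1 ≤ cA f x := by
          rw [cA]
          exact Multiset.card_pos_iff_exists_mem.2 ⟨c, hcroot⟩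
        omega
    · -- inductive step : s is the least critical point above x
      have hfd : f.derivative ≠ 0 := by
        intro h0; rw [h0] at hS; simp at hS
      have hSne : ((f.derivative.roots.filter (fun y => x < y)).toFinset).Nonempty := by
        rwa [Multiset.toFinset_nonempty]
      set s := (f.derivative.roots.filter (fun y => x < y)).toFinset.min' hSne with hsdef
      have hsmem : s ∈ f.derivative.roots.filter (fun y => x < y) := by
        have := Finset.min'_mem _ hSne
        rwa [Multiset.mem_toFinset] at this
      have hsroot : s ∈ f.derivative.roots := Multiset.mem_of_mem_filter hsmem
      have hxs : x < s := by
        have := Multiset.of_mem_filter hsmem; simpa using this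
      have hsval : f.derivative.eval s = 0 := (Polynomial.mem_roots'.1 hsroot).2
      have hsmin : ∀ y ∈ f.derivative.roots, x < y → s ≤ y := by
        intro y hy hxy
        apply Finset.min'_le
        rw [Multiset.mem_toFinset, Multiset.mem_filter]
        exact ⟨hy, hxy⟩
      have hmid0 : (f.derivative.roots.filter (fun y => x < y ∧ y < s)) = 0 := by
        rw [Multiset.filter_eq_nil]
        rintro y hy ⟨h1, h2⟩
        exact absurd (hsmin y hy h1) (not_le.2 h2)
      have hsplit' : cA f.derivative x = f.derivative.roots.count s + cA f.derivative s := by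
        have := cA_split (M := f.derivative.roots) hxs
        rw [cA, cA, this, hmid0]
        simp
      have hscount : 1 ≤ f.derivative.roots.count s := Multiset.one_le_count_iff_mem.2 hsroot
      have hsplitf : cA f x = Multiset.card (f.roots.filter (fun y => x < y ∧ y < s)) +
          f.roots.count s + cA f s := by
        have := cA_split (M := f.roots) hxs
        rw [cA, cA, this]
      have hlt : cA f.derivative s < k := by omega
      have IHs := IH _ hlt s hsval rfl
      by_cases hvx : f.eval x = 0
      · constructor
        · intro _
          have hcx := count_derivative_roots hf hvx
          by_cases hvs : f.eval s = 0
          · have h1 := IHs.1 hvs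
            omega
          · have hcs : f.derivative.roots.count s = 1 := by
              rcases (hC s hsval).1 with h | h
              · exact absurd h hvs
              · exact h
            have h2 := IHs.2 hvs
            omega
        · intro hvx'; exact absurd hvx hvx'
      · constructor
        · intro h; exact absurd h hvx
        · intro _
          by_cases hvs : f.eval s = 0
          · have h1 := IHs.1 hvs
            omega
          · -- both endpoint values nonzero: they have opposite signs
            have hcs : f.derivative.roots.count s = 1 := by
              rcases (hC s hsval).1 with h | h
              · exact absurd h hvs
              · exact h
            have e1 : (-1:ℝ) ^ (cA f.derivative x) * f.eval x < 0 :=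
              lt_of_le_of_ne ((hC x hx).2) (by
                intro h0
                rcases mul_eq_zero.1 h0 with h | h
                · exact absurd h (by positivity)
                · exact hvx h)
            have e2 : (-1:ℝ) ^ (cA f.derivative s) * f.eval s < 0 :=
              lt_of_le_of_ne ((hC s hsval).2) (by
                intro h0
                rcases mul_eq_zero.1 h0 with h | h
                · exact absurd h (by positivity)
                · exact hvs h)
            have hpow : (-1:ℝ) ^ (cA f.derivative x) = -(-1:ℝ) ^ (cA f.derivative s) := by
              rw [hsplit', hcs, pow_add]
              ring
            rw [hpow] at e1
            -- find a root of f in (x, s)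
            have hroot : ∃ c, c ∈ Set.Ioo x s ∧ f.eval c = 0 := by
              rcases Nat.even_or_odd (cA f.derivative s) with hev | hod
              · rw [hev.neg_one_pow] at e1 e2
                simp only [one_mul] at e2
                have hx0 : 0 < f.eval x := by linarith
                have hs0 : f.eval s < 0 := by linarith
                obtain ⟨c, hc1, hc2⟩ := intermediate_value_Ioo' (le_of_lt hxs) f.continuousOn
                  (Set.mem_Ioo.2 ⟨hs0, hx0⟩)
                exact ⟨c, hc1, hc2⟩
              · rw [hod.neg_one_pow] at e1 e2
                have hx0 : f.eval x < 0 := by linarith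
                have hs0 : 0 < f.eval s := by linarith
                obtain ⟨c, hc1, hc2⟩ := intermediate_value_Ioo (le_of_lt hxs) f.continuousOn
                  (Set.mem_Ioo.2 ⟨hx0, hs0⟩)
                exact ⟨c, hc1, hc2⟩
            obtain ⟨c, hc1, hc2⟩ := hroot
            have hcmem : c ∈ f.roots.filter (fun y => x < y ∧ y < s) := by
              rw [Multiset.mem_filter]
              exact ⟨Polynomial.mem_roots'.2 ⟨hf, hc2⟩, hc1.1, hc1.2⟩
            have hmid1 : 1 ≤ Multiset.card (f.roots.filter (fun y => x < y ∧ y < s)) :=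
              Multiset.card_pos_iff_exists_mem.2 ⟨c, hcmem⟩
            have h2 := IHs.2 hvs
            omega

lemma key_backward {f : Polynomial ℝ} (hn : 2 ≤ f.natDegree)
    (hlead : 0 < f.leadingCoeff)
    (hd : Multiset.card f.derivative.roots = f.natDegree - 1)
    (hC : ∀ y : ℝ, f.derivative.eval y = 0 →
       (f.eval y = 0 ∨ f.derivative.roots.count y = 1) ∧
       (-1:ℝ) ^ (cA f.derivative y) * f.eval y ≤ 0) :
    Multiset.card f.roots = f.natDegree := by
  classical
  have hf : f ≠ 0 := fun h0 => by simp [h0] at hlead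
  have hdegpos : 0 < f.degree := Polynomial.natDegree_pos_iff_degree_pos.1 (by omega)
  have hdne : f.derivative.roots ≠ 0 := by
    intro h0
    rw [h0] at hd
    simp at hd
    omega
  have hfd : f.derivative ≠ 0 := by
    intro h0; rw [h0] at hdne; simp at hdne
  have hSne : f.derivative.roots.toFinset.Nonempty := by rwa [Multiset.toFinset_nonempty]
  set s := f.derivative.roots.toFinset.min' hSne with hsdef
  have hsroot : s ∈ f.derivative.roots := by
    have := Finset.min'_mem _ hSne
    rwa [Multiset.mem_toFinset] at this
  have hsval : f.derivative.eval s = 0 := (Polynomial.mem_roots'.1 hsroot).2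
  have hsmin : ∀ y ∈ f.derivative.roots, s ≤ y := by
    intro y hy
    exact Finset.min'_le _ _ (Multiset.mem_toFinset.2 hy)
  have hbelow : cB f.derivative s = 0 := by
    rw [cB, Multiset.card_eq_zero, Multiset.filter_eq_nil]
    intro y hy h1
    exact absurd (hsmin y hy) (not_le.2 h1)
  have htot' : cB f.derivative s + f.derivative.roots.count s + cA f.derivative s
      = f.natDegree - 1 := by
    unfold cA cB
    have := card_split f.derivative.roots s
    unfold cB at hbelow
    omega
  have htop : Multiset.card f.roots ≤ f.natDegree := Polynomial.card_roots' f
  have htotf : cB f s + f.roots.count s + cA f s = Multiset.card f.roots := by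
    unfold cA cB
    have := card_split f.roots s
    omega
  have hW := Wstep f hf hlead hdegpos hC (cA f.derivative s) s hsval rfl
  by_cases hvs : f.eval s = 0
  · have h1 := hW.1 hvs
    omega
  · have hcs : f.derivative.roots.count s = 1 := by
      rcases (hC s hsval).1 with h | h
      · exact absurd h hvs
      · exact h
    have h1 := hW.2 hvs
    -- we need one more root strictly below s
    have hsign := lt_of_le_of_ne ((hC s hsval).2) (by
      intro h0
      rcases mul_eq_zero.1 h0 with h | h
      · exact absurd h (by positivity)
      · exact hvs h)
    have hAs : cA f.derivative s = f.natDegree - 2 := by omega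
    -- consider g(t) = (-1)^n * f(-t), which has positive leading coefficient
    set g := Polynomial.C ((-1:ℝ) ^ f.natDegree) * (f.comp (-Polynomial.X)) with hgdef
    have hgeval : ∀ t, g.eval t = (-1:ℝ) ^ f.natDegree * f.eval (-t) := by
      intro t
      rw [hgdef]
      simp [Polynomial.eval_comp]
    have hgne : f.comp (-Polynomial.X) ≠ 0 := by
      intro h0
      have := Polynomial.natDegree_comp (p := f) (q := (-Polynomial.X : Polynomial ℝ))
      rw [h0] at this
      simp at this
      omega
    have hglead : g.leadingCoeff = f.leadingCoeff := by
      rw [hgdef, Polynomial.leadingCoeff_mul, Polynomial.leadingCoeff_C,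
        Polynomial.leadingCoeff_comp (by simp), Polynomial.leadingCoeff_neg,
        Polynomial.leadingCoeff_X]
      have h9 : ((-1:ℝ)) ^ f.natDegree * ((-1:ℝ)) ^ f.natDegree = 1 := by
        rw [← pow_add]; exact (Even.add_self _).neg_one_pow
      linear_combination f.leadingCoeff * h9
    have hgdeg : 0 < g.degree := by
      have h2 : g.natDegree = f.natDegree := by
        rw [hgdef, Polynomial.natDegree_C_mul (by positivity), Polynomial.natDegree_comp]
        simp
      apply Polynomial.natDegree_pos_iff_degree_pos.1
      omega
    have ht := Polynomial.tendsto_atTop_of_leadingCoeff_nonneg g hgdeg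
      (by rw [hglead]; exact le_of_lt hlead)
    obtain ⟨t, ht1, ht2⟩ :=
      ((ht.eventually_gt_atTop 0).and (Filter.eventually_gt_atTop (-s))).exists
    have hy : (-1:ℝ) ^ f.natDegree * f.eval (-t) > 0 := by
      rw [← hgeval]; exact ht1
    have hys : -t < s := by linarith
    -- signs of f at -t and s are opposite
    have hpows : (-1:ℝ) ^ (f.natDegree - 2) = (-1:ℝ) ^ f.natDegree := by
      conv_rhs => rw [show f.natDegree = (f.natDegree - 2) + 2 by omega]
      rw [pow_add]
      ring
    rw [hAs, hpows] at hsign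
    have hroot : ∃ c, c ∈ Set.Ioo (-t) s ∧ f.eval c = 0 := by
      rcases Nat.even_or_odd f.natDegree with hev | hod
      · rw [hev.neg_one_pow] at hy hsign
        simp only [one_mul] at hy hsign
        obtain ⟨c, hc1, hc2⟩ := intermediate_value_Ioo' (le_of_lt hys) f.continuousOn
          (Set.mem_Ioo.2 ⟨hsign, hy⟩)
        exact ⟨c, hc1, hc2⟩
      · rw [hod.neg_one_pow] at hy hsign
        have hy' : f.eval (-t) < 0 := by linarith
        have hs' : 0 < f.eval s := by linarith
        obtain ⟨c, hc1, hc2⟩ := intermediate_value_Ioo (le_of_lt hys) f.continuousOn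
          (Set.mem_Ioo.2 ⟨hy', hs'⟩)
        exact ⟨c, hc1, hc2⟩
    obtain ⟨c, hc1, hc2⟩ := hroot
    have hcmem : c ∈ f.roots.filter (fun y => y < s) := by
      rw [Multiset.mem_filter]
      exact ⟨Polynomial.mem_roots'.2 ⟨hf, hc2⟩, hc1.2⟩
    have hcB : 1 ≤ cB f s := by
      rw [cB]
      exact Multiset.card_pos_iff_exists_mem.2 ⟨c, hcmem⟩
    omega


noncomputable def T (a : ℕ → ℝ) (m : ℕ) : Polynomial ℝ :=
  ∑ i ∈ Finset.range (m + 1), Polynomial.C (a i) * Polynomial.X ^ (m - i)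

lemma T_coeff_top (a : ℕ → ℝ) (m : ℕ) : (T a m).coeff m = a 0 := by
  rw [T, Polynomial.finset_sum_coeff]
  rw [Finset.sum_eq_single 0]
  · simp
  · intro i hi hne
    rw [Polynomial.coeff_C_mul, Polynomial.coeff_X_pow]
    have h2 : m - i ≠ m := by
      rw [Finset.mem_range] at hi
      omega
    rw [if_neg (fun h => h2 h.symm)]
    ring
  · intro h
    simp at h

lemma T_natDegree_le (a : ℕ → ℝ) (m : ℕ) : (T a m).natDegree ≤ m := by
  apply Polynomial.natDegree_sum_le_of_forall_le
  intro i hi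
  apply le_trans (Polynomial.natDegree_C_mul_le _ _)
  rw [Polynomial.natDegree_X_pow]
  omega

lemma T_natDegree (a : ℕ → ℝ) (m : ℕ) (h : a 0 ≠ 0) : (T a m).natDegree = m := by
  refine le_antisymm (T_natDegree_le a m) ?_
  apply Polynomial.le_natDegree_of_ne_zero
  rw [T_coeff_top]
  exact h

lemma T_ne (a : ℕ → ℝ) (m : ℕ) (h : a 0 ≠ 0) : T a m ≠ 0 := by
  intro h0
  have := T_coeff_top a m
  rw [h0] at this
  simp at this
  exact h this.symm

lemma T_lead (a : ℕ → ℝ) (m : ℕ) (h : a 0 ≠ 0) : (T a m).leadingCoeff = a 0 := by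
  rw [Polynomial.leadingCoeff, T_natDegree a m h, T_coeff_top]

lemma T_eval_pos (a : ℕ → ℝ) (m : ℕ) (hpos : ∀ i ≤ m, 0 < a i) {t : ℝ} (ht : 0 ≤ t) :
    0 < (T a m).eval t := by
  rw [T, Polynomial.eval_finset_sum]
  apply Finset.sum_pos'
  · intro i hi
    rw [Finset.mem_range] at hi
    simp only [Polynomial.eval_mul, Polynomial.eval_C, Polynomial.eval_pow, Polynomial.eval_X]
    have := hpos i (by omega)
    positivity
  · refine ⟨m, by simp, ?_⟩
    simp only [Polynomial.eval_mul, Polynomial.eval_C, Polynomial.eval_pow, Polynomial.eval_X]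
    simp
    exact hpos m le_rfl

lemma T_split (a : ℕ → ℝ) (m : ℕ) :
    T a (m + 1) = Polynomial.X * T a m + Polynomial.C (a (m + 1)) := by
  rw [T, T, Finset.sum_range_succ, Finset.mul_sum]
  congr 1
  · apply Finset.sum_congr rfl
    intro i hi
    rw [Finset.mem_range] at hi
    have : m + 1 - i = (m - i) + 1 := by omega
    rw [this, pow_succ]
    ring
  · simp

lemma bridge (a : ℕ → ℝ) (m : ℕ) (z : ℂ) (hz : z ≠ 0) :
    Polynomial.aeval z (T a m) = z ^ m * Polynomial.aeval z⁻¹ (sect a m) := by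
  rw [T, sect, map_sum, map_sum, Finset.mul_sum]
  apply Finset.sum_congr rfl
  intro i hi
  rw [Finset.mem_range] at hi
  rw [map_mul, map_mul, Polynomial.aeval_C, Polynomial.aeval_C, map_pow, map_pow,
    Polynomial.aeval_X, Polynomial.aeval_X]
  rw [inv_pow, mul_comm ((algebraMap ℝ ℂ) (a i)) ((z ^ i)⁻¹), ← mul_assoc]
  rw [← pow_sub₀ z hz (by omega)]
  ring

lemma aeval_zero_T (a : ℕ → ℝ) (m : ℕ) : Polynomial.aeval (0 : ℂ) (T a m) = a m := by
  rw [T, map_sum]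
  rw [Finset.sum_eq_single m]
  · simp
  · intro i hi hne
    rw [Finset.mem_range] at hi
    rw [map_mul, map_pow, Polynomial.aeval_X, Polynomial.aeval_C]
    rw [zero_pow (by omega)]
    ring
  · intro h; simp at h

lemma aeval_zero_sect (a : ℕ → ℝ) (m : ℕ) : Polynomial.aeval (0 : ℂ) (sect a m) = a 0 := by
  rw [sect, map_sum]
  rw [Finset.sum_eq_single 0]
  · simp
  · intro i hi hne
    rw [map_mul, map_pow, Polynomial.aeval_X, Polynomial.aeval_C]
    rw [zero_pow hne]
    ring
  · intro h; simp at h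

lemma im_eq_zero_of_inv {z : ℂ} (hz : z ≠ 0) (h : z⁻¹.im = 0) : z.im = 0 := by
  rw [Complex.inv_im] at h
  have hn : Complex.normSq z ≠ 0 := fun h => hz (Complex.normSq_eq_zero.1 h)
  field_simp at h
  simpa using h

lemma hyp_T (a : ℕ → ℝ) (m : ℕ) (hm : Hyperbolic (sect a m)) : Hyperbolic (T a m) := by
  intro z hz
  by_cases h0 : z = 0
  · rw [h0]; simp
  · rw [bridge a m z h0] at hz
    rcases mul_eq_zero.1 hz with h | h
    · exact absurd h (pow_ne_zero _ h0)
    · have := hm z⁻¹ h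
      by_cases hinv : z⁻¹ = 0
      · rw [inv_eq_zero] at hinv; exact absurd hinv h0
      · exact im_eq_zero_of_inv h0 this

lemma hyp_X_mul (Q : Polynomial ℝ) (hQ : Hyperbolic Q) : Hyperbolic (Polynomial.X * Q) := by
  intro z hz
  rw [map_mul, Polynomial.aeval_X] at hz
  rcases mul_eq_zero.1 hz with h | h
  · rw [h]; simp
  · exact hQ z h


lemma bridge2 (a : ℕ → ℝ) (n : ℕ) (hn : 2 ≤ n) (A : ℝ) (z : ℂ) (hz : z ≠ 0) :
    Polynomial.aeval z (Polynomial.X * T a (n-1) + Polynomial.C A) =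
      z ^ n * Polynomial.aeval z⁻¹ (sect a (n-1) + Polynomial.C A * Polynomial.X ^ n) := by
  have hzn : z ^ n ≠ 0 := pow_ne_zero _ hz
  simp only [_root_.map_add, _root_.map_mul, _root_.map_pow, Polynomial.aeval_X,
    Polynomial.aeval_C]
  rw [bridge a (n-1) z hz]
  rw [mul_add]
  congr 1
  · rw [← mul_assoc]
    congr 1
    conv_rhs => rw [show n = (n-1)+1 by omega]
    rw [pow_succ]
    ring
  · rw [inv_pow, ← mul_assoc, mul_comm (z^n) _, mul_assoc, mul_inv_cancel₀ hzn]
    ring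

lemma hyp_transfer (a : ℕ → ℝ) (n : ℕ) (hn : 2 ≤ n) (ha0 : a 0 ≠ 0) (A : ℝ) (hA : A ≠ 0) :
    Hyperbolic (sect a (n-1) + Polynomial.C A * Polynomial.X ^ n) ↔
    Hyperbolic (Polynomial.X * T a (n-1) + Polynomial.C A) := by
  constructor
  · intro hq z hz
    by_cases h0 : z = 0
    · rw [h0]; simp
    · rw [bridge2 a n hn A z h0] at hz
      rcases mul_eq_zero.1 hz with hc | hc
      · exact absurd hc (pow_ne_zero _ h0)
      · exact im_eq_zero_of_inv h0 (hq z⁻¹ hc)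
  · intro hp w hw
    by_cases h0 : w = 0
    · rw [h0]; simp
    · have hw' : Polynomial.aeval w⁻¹ (Polynomial.X * T a (n-1) + Polynomial.C A) = 0 := by
        rw [bridge2 a n hn A w⁻¹ (inv_ne_zero h0), inv_inv, hw, mul_zero]
      have h2 := hp w⁻¹ hw'
      rw [Complex.inv_im] at h2
      have hn2 : Complex.normSq w ≠ 0 := fun hc => h0 (Complex.normSq_eq_zero.1 hc)
      field_simp at h2
      simpa using h2

lemma T_eval_zero (a : ℕ → ℝ) (m : ℕ) : (T a m).eval 0 = a m := by
  rw [T, Polynomial.eval_finset_sum]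
  rw [Finset.sum_eq_single m]
  · simp
  · intro i hi hne
    rw [Finset.mem_range] at hi
    simp only [Polynomial.eval_mul, Polynomial.eval_C, Polynomial.eval_pow, Polynomial.eval_X]
    rw [zero_pow (by omega : m - i ≠ 0)]
    ring
  · intro hmem; simp at hmem

lemma hyp_sect_zero (a : ℕ → ℝ) (ha0 : a 0 ≠ 0) : Hyperbolic (sect a 0) := by
  intro z hz
  exfalso
  rw [sect, Finset.sum_range_one] at hz
  simp at hz
  exact ha0 hz

/-- The central lemma: for section-hyperbolic data, every critical point of `P = X·T a (n-1)`
with an even number of critical points above it has strictly negative `P`-value, and all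
critical points are simple roots of `P'`. -/
lemma lemL (a : ℕ → ℝ) (n : ℕ) (hn : 2 ≤ n) (h : SectionHyperbolic a (n-1)) :
    ∀ x : ℝ, (Polynomial.X * T a (n-1) : Polynomial ℝ).derivative.eval x = 0 →
      (Even (cA (Polynomial.X * T a (n-1)).derivative x) →
        (Polynomial.X * T a (n-1)).eval x < 0) ∧
      ((Polynomial.X * T a (n-1)).eval x = 0 →
        (Polynomial.X * T a (n-1)).derivative.roots.count x = 1) := by
  classical
  obtain ⟨ha, hsects⟩ := h
  have ha0 : a 0 ≠ 0 := ne_of_gt (ha 0 (by omega))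
  set Q : Polynomial ℝ := T a (n-1) with hQdef
  set P : Polynomial ℝ := Polynomial.X * Q with hPdef
  set Q2 : Polynomial ℝ := T a (n-2) with hQ2def
  set P1 : Polynomial ℝ := Polynomial.X * Q2 with hP1def
  -- basic degree facts
  have hQne : Q ≠ 0 := T_ne a (n-1) ha0
  have hQ2ne : Q2 ≠ 0 := T_ne a (n-2) ha0
  have hPne : P ≠ 0 := mul_ne_zero Polynomial.X_ne_zero hQne
  have hP1ne : P1 ≠ 0 := mul_ne_zero Polynomial.X_ne_zero hQ2ne
  have hQdeg : Q.natDegree = n - 1 := T_natDegree a (n-1) ha0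
  have hQ2deg : Q2.natDegree = n - 2 := T_natDegree a (n-2) ha0
  have hPdeg : P.natDegree = n := by
    rw [hPdef, Polynomial.natDegree_mul Polynomial.X_ne_zero hQne,
      Polynomial.natDegree_X, hQdeg]
    omega
  have hP1deg : P1.natDegree = n - 1 := by
    rw [hP1def, Polynomial.natDegree_mul Polynomial.X_ne_zero hQ2ne,
      Polynomial.natDegree_X, hQ2deg]
    omega
  have hPlead : 0 < P.leadingCoeff := by
    rw [hPdef, Polynomial.leadingCoeff_mul, Polynomial.leadingCoeff_X, one_mul,
      T_lead a (n-1) ha0]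
    exact ha 0 (by omega)
  have hP1lead : 0 < P1.leadingCoeff := by
    rw [hP1def, Polynomial.leadingCoeff_mul, Polynomial.leadingCoeff_X, one_mul,
      T_lead a (n-2) ha0]
    exact ha 0 (by omega)
  -- hyperbolicity facts
  have hsect1 : Hyperbolic (sect a (n-1)) := hsects (n-1) (by omega) le_rfl
  have hsect2 : Hyperbolic (sect a (n-2)) := by
    rcases eq_or_lt_of_le hn with h2 | h3
    · rw [show n - 2 = 0 by omega]
      exact hyp_sect_zero a ha0
    · exact hsects (n-2) (by omega) (by omega)
  have hQhyp : Hyperbolic Q := hyp_T a (n-1) hsect1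
  have hQ2hyp : Hyperbolic Q2 := hyp_T a (n-2) hsect2
  have hPhyp : Hyperbolic P := hyp_X_mul Q hQhyp
  have hP1hyp : Hyperbolic P1 := hyp_X_mul Q2 hQ2hyp
  have hPcard : Multiset.card P.roots = P.natDegree := (hyperbolic_iff hPne).1 hPhyp
  have hP1card : Multiset.card P1.roots = P1.natDegree := (hyperbolic_iff hP1ne).1 hP1hyp
  have hQcard : Multiset.card Q.roots = Q.natDegree := (hyperbolic_iff hQne).1 hQhyp
  -- structure of Q and derivatives
  have hQsplit : Q = P1 + Polynomial.C (a (n-1)) := by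
    rw [hQdef, hP1def, hQ2def]
    have := T_split a (n-2)
    rw [show n - 2 + 1 = n - 1 by omega] at this
    exact this
  have hQ'eq : Q.derivative = P1.derivative := by
    rw [hQsplit]
    simp
  have hP'eq : P.derivative = Q + Polynomial.X * Q.derivative := by
    rw [hPdef, Polynomial.derivative_mul, Polynomial.derivative_X, one_mul]
  have hQ0 : Q.eval 0 = a (n-1) := T_eval_zero a (n-1)
  -- key dichotomy at points where both P and P' vanish
  intro x hx
  have key0 : P.eval x = 0 → x < 0 ∧ Q.eval x = 0 ∧ Q.derivative.eval x = 0 ∧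
      Q.derivative.roots.count x = 1 ∧ Q.roots.count x = 2 ∧ P.roots.count x = 2 := by
    intro hPx
    have hx0 : x ≠ 0 := by
      intro hx0
      rw [hx0] at hx
      rw [hP'eq] at hx
      simp [hQ0] at hx
      exact ne_of_gt (ha (n-1) le_rfl) hx
    have hQx : Q.eval x = 0 := by
      rw [hPdef] at hPx
      simp at hPx
      rcases hPx with h1 | h1
      · exact absurd h1 hx0
      · exact h1
    have hxneg : x < 0 := by
      rcases lt_or_ge x 0 with hc | hc
      · exact hc
      · exfalso
        have := T_eval_pos a (n-1) (fun i hi => ha i hi) hc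
        rw [← hQdef] at this
        exact ne_of_gt this hQx
    have hQ'x : Q.derivative.eval x = 0 := by
      rw [hP'eq] at hx
      simp [hQx] at hx
      rcases hx with h1 | h1
      · exact absurd h1 hx0
      · exact h1
    -- apply the forward lemma to P1 at x (where P1 does not vanish)
    have hP1x : P1.eval x = -(a (n-1)) := by
      have : Q.eval x = P1.eval x + a (n-1) := by rw [hQsplit]; simp
      rw [hQx] at this
      linarith
    have hP1xne : P1.eval x ≠ 0 := by
      rw [hP1x]
      simp
      exact ne_of_gt (ha (n-1) le_rfl)
    have hP1'x : P1.derivative.eval x = 0 := by rw [← hQ'eq]; exact hQ'x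
    obtain ⟨hcnt1, -⟩ := (key_forward hP1ne hP1card (by omega) hP1'x).2 hP1xne
    rw [← hQ'eq] at hcnt1
    have hQcnt := count_derivative_roots hQne hQx
    have hPX : P.roots = Polynomial.X.roots + Q.roots := by
      rw [hPdef, Polynomial.roots_mul (by rw [← hPdef]; exact hPne)]
    have hPcnt : P.roots.count x = Q.roots.count x := by
      rw [hPX, Multiset.count_add, Polynomial.roots_X, Multiset.count_singleton]
      rw [if_neg hx0]
      omega
    exact ⟨hxneg, hQx, hQ'x, hcnt1, by omega, by omega⟩
  constructor
  · -- part 1 : parity forces negativity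
    intro hEv
    by_contra hge
    push_neg at hge
    rcases eq_or_lt_of_le hge with hPx | hPx
    · -- P(x) = 0 : derive a parity contradiction
      obtain ⟨hxneg, hQx, hQ'x, hcnt1, hQcnt2, hPcnt2⟩ := key0 hPx.symm
      -- cA Q' x = cA Q x
      obtain ⟨hQAeq, -, -⟩ := (key_forward hQne hQcard (by omega) hQ'x).1 hQx
      -- Even (cA Q' x) from the sign at P1
      have hs := key_forward_sign hP1ne hP1card (by omega) hP1lead
        (by rw [← hQ'eq]; exact hQ'x) (by
          rw [show P1.eval x = -(a (n-1)) from ?_]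
          · simp; exact ne_of_gt (ha (n-1) le_rfl)
          · have : Q.eval x = P1.eval x + a (n-1) := by rw [hQsplit]; simp
            rw [hQx] at this; linarith)
      rw [← hQ'eq] at hs
      have hP1vx : P1.eval x = -(a (n-1)) := by
        have : Q.eval x = P1.eval x + a (n-1) := by rw [hQsplit]; simp
        rw [hQx] at this; linarith
      rw [hP1vx] at hs
      have hEvQ : Even (cA Q.derivative x) := by
        rcases Nat.even_or_odd (cA Q.derivative x) with he | ho
        · exact he
        · exfalso
          rw [ho.neg_one_pow] at hs
          have := ha (n-1) le_rfl
          nlinarith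
      -- cA P x = cA Q x + 1
      have hPX : P.roots = Polynomial.X.roots + Q.roots := by
        rw [hPdef, Polynomial.roots_mul (by rw [← hPdef]; exact hPne)]
      have hPA : cA P x = cA Q x + 1 := by
        rw [cA, cA, hPX, Multiset.filter_add, Multiset.card_add, Polynomial.roots_X]
        have : ({0} : Multiset ℝ).filter (fun y => x < y) = {0} := by
          rw [Multiset.filter_eq_self]
          intro y hy
          rw [Multiset.mem_singleton] at hy
          rw [hy]
          exact hxneg
        rw [this]
        simp
        omega
      -- cA P' x = cA P x
      obtain ⟨hPAeq, -, -⟩ := (key_forward hPne hPcard (by omega) hx).1 hPx.symm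
      rw [hPAeq, hPA, ← hQAeq] at hEv
      rcases hEvQ with ⟨m, hm⟩
      rcases hEv with ⟨m', hm'⟩
      omega
    · -- P(x) > 0 : contradicts the sign of hyperbolic P at critical points
      have hs := key_forward_sign hPne hPcard (by omega) hPlead hx (ne_of_gt hPx)
      rw [hEv.neg_one_pow] at hs
      linarith
  · -- part 2 : all critical points are simple roots of P'
    intro hPx
    obtain ⟨-, -, -, -, -, hPcnt2⟩ := key0 hPx
    have := count_derivative_roots hPne hPx
    omega

end SH
end SHdev

/-- For a section-hyperbolic polynomial `p` of degree `n-1` (with `n ≥ 2`), the set of `A > 0`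
such that `p(x) + A x^n` is hyperbolic is nonempty and has a greatest element. -/
theorem stmt2 (n : ℕ) (hn : 2 ≤ n) (a : ℕ → ℝ) (h : SectionHyperbolic a (n - 1)) :
    {A : ℝ | 0 < A ∧ Hyperbolic (sect a (n - 1) + Polynomial.C A * Polynomial.X ^ n)}.Nonempty ∧
    ∃ Amax ∈ {A : ℝ | 0 < A ∧ Hyperbolic (sect a (n - 1) + Polynomial.C A * Polynomial.X ^ n)},
      ∀ B ∈ {A : ℝ | 0 < A ∧ Hyperbolic (sect a (n - 1) + Polynomial.C A * Polynomial.X ^ n)},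
        B ≤ Amax := by
  classical
  open SH in
  have ha := h.1
  have ha0 : a 0 ≠ 0 := ne_of_gt (ha 0 (by omega))
  set Q : Polynomial ℝ := SH.T a (n-1) with hQdef
  set P : Polynomial ℝ := Polynomial.X * Q with hPdef
  have hQne : Q ≠ 0 := SH.T_ne a (n-1) ha0
  have hPne : P ≠ 0 := mul_ne_zero Polynomial.X_ne_zero hQne
  have hQdeg : Q.natDegree = n - 1 := SH.T_natDegree a (n-1) ha0
  have hPdeg : P.natDegree = n := by
    rw [hPdef, Polynomial.natDegree_mul Polynomial.X_ne_zero hQne,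
      Polynomial.natDegree_X, hQdeg]
    omega
  have hPlead : 0 < P.leadingCoeff := by
    rw [hPdef, Polynomial.leadingCoeff_mul, Polynomial.leadingCoeff_X, one_mul,
      SH.T_lead a (n-1) ha0]
    exact ha 0 (by omega)
  have hsect1 : Hyperbolic (sect a (n-1)) := h.2 (n-1) (by omega) le_rfl
  have hQhyp : Hyperbolic Q := SH.hyp_T a (n-1) hsect1
  have hPhyp : Hyperbolic P := SH.hyp_X_mul Q hQhyp
  have hPcard : Multiset.card P.roots = P.natDegree := (SH.hyperbolic_iff hPne).1 hPhyp
  have hP'card : Multiset.card P.derivative.roots = n - 1 := by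
    have := SH.roots_card_derivative hPne hPcard (by omega)
    rwa [hPdeg] at this
  have hP'ne : P.derivative ≠ 0 := by
    intro h0
    rw [h0] at hP'card
    simp at hP'card
    omega
  have hL := SH.lemL a n hn h
  -- facts about P + C c
  have hfacts : ∀ c : ℝ, (P + Polynomial.C c).natDegree = n ∧
      (P + Polynomial.C c).leadingCoeff = P.leadingCoeff ∧
      (P + Polynomial.C c).derivative = P.derivative ∧ (P + Polynomial.C c) ≠ 0 := by
    intro c
    have h1 : (P + Polynomial.C c).natDegree = n := by
      rw [Polynomial.natDegree_add_C, hPdeg]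
    have h3 : (P + Polynomial.C c).derivative = P.derivative := by simp
    refine ⟨h1, ?_, h3, ?_⟩
    · rw [Polynomial.leadingCoeff, Polynomial.leadingCoeff, h1, hPdeg,
        Polynomial.coeff_add, Polynomial.coeff_C, if_neg (by omega : ¬ n = 0), add_zero]
    · intro h0
      rw [h0] at h1
      simp at h1
      omega
  -- the finite set of relevant critical points
  set F := P.derivative.roots.toFinset.filter (fun x => Even (SH.cA P.derivative x)) with hF
  have hFne : F.Nonempty := by
    have hne : P.derivative.roots.toFinset.Nonempty := by
      rw [Multiset.toFinset_nonempty]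
      intro h0
      rw [h0] at hP'card
      simp at hP'card
      omega
    refine ⟨P.derivative.roots.toFinset.max' hne, ?_⟩
    rw [hF, Finset.mem_filter]
    refine ⟨Finset.max'_mem _ _, ?_⟩
    have h0 : SH.cA P.derivative (P.derivative.roots.toFinset.max' hne) = 0 := by
      rw [SH.cA, Multiset.card_eq_zero, Multiset.filter_eq_nil]
      intro y hy hlt
      exact absurd (Finset.le_max' _ y (Multiset.mem_toFinset.2 hy)) (not_le.2 hlt)
    rw [h0]
    exact Even.zero
  have hmemF : ∀ x ∈ F, P.derivative.eval x = 0 ∧ Even (SH.cA P.derivative x) := by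
    intro x hx
    rw [hF, Finset.mem_filter, Multiset.mem_toFinset] at hx
    exact ⟨(Polynomial.mem_roots'.1 hx.1).2, hx.2⟩
  set Abar := F.inf' hFne (fun x => -(P.eval x)) with hAbar
  have hApos : 0 < Abar := by
    rw [hAbar, Finset.lt_inf'_iff]
    intro x hxF
    obtain ⟨hx1, hx2⟩ := hmemF x hxF
    have := (hL x hx1).1 hx2
    linarith
  have hAle : ∀ x ∈ F, Abar ≤ -(P.eval x) := by
    intro x hx
    rw [hAbar]
    exact Finset.inf'_le _ hx
  -- Abar gives a hyperbolic polynomial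
  have hhypA : Hyperbolic (P + Polynomial.C Abar) := by
    obtain ⟨hf1, hf2, hf3, hf4⟩ := hfacts Abar
    rw [SH.hyperbolic_iff hf4, hf1]
    have := SH.key_backward (f := P + Polynomial.C Abar) (by omega : 2 ≤ (P + Polynomial.C Abar).natDegree)
      (by rw [hf2]; exact hPlead) (by rw [hf3, hf1]; exact hP'card) ?_
    · rw [hf1] at this; exact this
    · intro y hy
      rw [hf3] at hy ⊢
      have hevaly : (P + Polynomial.C Abar).eval y = P.eval y + Abar := by simp
      constructor
      · right
        by_cases hv : P.eval y = 0
        · exact (hL y hy).2 hv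
        · exact ((SH.key_forward hPne hPcard (by omega) hy).2 hv).1
      · rw [hevaly]
        rcases Nat.even_or_odd (SH.cA P.derivative y) with hev | hod
        · rw [hev.neg_one_pow, one_mul]
          have hyF : y ∈ F := by
            rw [hF, Finset.mem_filter, Multiset.mem_toFinset]
            exact ⟨Polynomial.mem_roots'.2 ⟨hP'ne, hy⟩, hev⟩
          have := hAle y hyF
          linarith
        · rw [hod.neg_one_pow]
          by_cases hv : P.eval y = 0
          · rw [hv]; linarith
          · have hs := SH.key_forward_sign hPne hPcard (by omega) hPlead hy hv
            rw [hod.neg_one_pow] at hs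
            nlinarith
  -- conclusion
  have hAmem : Abar ∈ {A : ℝ | 0 < A ∧
      Hyperbolic (sect a (n - 1) + Polynomial.C A * Polynomial.X ^ n)} := by
    refine ⟨hApos, ?_⟩
    exact (SH.hyp_transfer a n hn ha0 Abar (ne_of_gt hApos)).2 hhypA
  have hmax : ∀ B ∈ {A : ℝ | 0 < A ∧
      Hyperbolic (sect a (n - 1) + Polynomial.C A * Polynomial.X ^ n)}, B ≤ Abar := by
    rintro B ⟨hB0, hBhyp⟩
    have hhypB : Hyperbolic (P + Polynomial.C B) :=
      (SH.hyp_transfer a n hn ha0 B (ne_of_gt hB0)).1 hBhyp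
    obtain ⟨hf1, hf2, hf3, hf4⟩ := hfacts B
    have hcardB := (SH.hyperbolic_iff hf4).1 hhypB
    rw [hAbar]
    apply Finset.le_inf'
    intro x hxF
    obtain ⟨hx1, hx2⟩ := hmemF x hxF
    have hevalx : (P + Polynomial.C B).eval x = P.eval x + B := by simp
    by_cases hv : (P + Polynomial.C B).eval x = 0
    · rw [hevalx] at hv
      linarith
    · have hs := SH.key_forward_sign (f := P + Polynomial.C B) hf4 hcardB
        (by omega) (by rw [hf2]; exact hPlead) (by rw [hf3]; exact hx1) hv
      rw [hf3, hx2.neg_one_pow, one_mul, hevalx] at hs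
      linarith
  exact ⟨⟨Abar, hAmem⟩, Abar, hAmem, hmax⟩
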